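/- (Alternating residuals, Hermitian case.) Let A be an n×n complex Hermitian invertible matrix (Aᴴ = A) with n ≥ 2, and take the restart parameter m = n−1. Let r₀, r₁, …, r_q ∈ ℂⁿ be a sequence of nonzero vectors such that for each k the vector r_k is a GMRES(n−1) residual of A from r_{k−1}. Then for every k = 1, …, q−1 one has r_{k+1} = α_k r_{k−1} with α_k = ‖r_{k+1}‖²/‖r_k‖², and 0 < α_k ≤ 1. -/

import Mathlib

open Polynomial Matrix

/-- The Euclidean (ℓ²) norm of a vector in ℂⁿ. -/
noncomputable def euclidNorm {n : ℕ} (v : Fin n → ℂ) : ℝ :=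
  ‖(WithLp.equiv 2 (Fin n → ℂ)).symm v‖

/-- `s` is a GMRES(m) residual of `A` from `r`: there is a polynomial `p` of degree at most `m`
with `p 0 = 1` such that `s = p(A) r` and `‖s‖ ≤ ‖q(A) r‖` for all admissible `q`. -/
def IsGMRESResidual {n : ℕ} (m : ℕ) (A : Matrix (Fin n) (Fin n) ℂ)
    (r s : Fin n → ℂ) : Prop :=
  ∃ p : ℂ[X], p.natDegree ≤ m ∧ p.eval 0 = 1 ∧ s = (aeval A p).mulVec r ∧
    ∀ q : ℂ[X], q.natDegree ≤ m → q.eval 0 = 1 →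
      euclidNorm s ≤ euclidNorm ((aeval A q).mulVec r)

/-- The Krylov matrix `K(A, r) = [r, Ar, …, Aᵐ r]`, an `n × (m+1)` matrix. -/
noncomputable def krylov {n : ℕ} (m : ℕ) (A : Matrix (Fin n) (Fin n) ℂ) (r : Fin n → ℂ) :
    Matrix (Fin n) (Fin (m + 1)) ℂ :=
  Matrix.of fun i j => (A ^ (j : ℕ)).mulVec r i

/- ### Auxiliary machinery -/

/-- Abbreviation sending a plain vector to Euclidean space. -/
noncomputable def ee {n : ℕ} (v : Fin n → ℂ) : EuclideanSpace ℂ (Fin n) :=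
  (WithLp.equiv 2 (Fin n → ℂ)).symm v

lemma ee_linear {n : ℕ} (v : Fin n → ℂ) :
    ee v = (WithLp.linearEquiv 2 ℂ (Fin n → ℂ)).symm v := rfl

lemma ee_injective {n : ℕ} : Function.Injective (ee (n := n)) :=
  (WithLp.equiv 2 (Fin n → ℂ)).symm.injective

lemma ee_add {n : ℕ} (x y : Fin n → ℂ) : ee (x + y) = ee x + ee y :=
  rfl

lemma ee_smul {n : ℕ} (c : ℂ) (x : Fin n → ℂ) : ee (c • x) = c • ee x :=
  rfl

lemma ee_zero {n : ℕ} : ee (0 : Fin n → ℂ) = 0 :=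
  rfl

lemma ee_sum {n : ℕ} {ι : Type*} (t : Finset ι) (f : ι → Fin n → ℂ) :
    ee (∑ j ∈ t, f j) = ∑ j ∈ t, ee (f j) := by
  simp only [ee_linear]; exact map_sum _ _ _

lemma ee_sub {n : ℕ} (x y : Fin n → ℂ) : ee (x - y) = ee x - ee y := by
  simp only [ee_linear]; exact map_sub _ _ _

lemma euclidNorm_ee {n : ℕ} (x : Fin n → ℂ) : euclidNorm x = ‖ee x‖ := rfl

lemma euclidNorm_pos {n : ℕ} {v : Fin n → ℂ} (hv : v ≠ 0) : 0 < euclidNorm v := by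
  rw [euclidNorm_ee, norm_pos_iff]
  intro h
  exact hv (ee_injective (h.trans ee_zero.symm))

lemma euclidNorm_zero {n : ℕ} : euclidNorm (0 : Fin n → ℂ) = 0 := by
  rw [euclidNorm_ee, ee_zero, norm_zero]

/-- If `s` minimizes the norm over the line `s + ℂ v`, then `v ⟂ s`. -/
lemma inner_eq_zero_of_min {E : Type*} [NormedAddCommGroup E] [InnerProductSpace ℂ E]
    (s v : E) (h : ∀ c : ℂ, ‖s‖ ≤ ‖s + c • v‖) : (inner ℂ v s : ℂ) = 0 := by
  by_contra ha
  have hv : v ≠ 0 := by rintro rfl; simp at ha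
  have hv2 : (0:ℝ) < ‖v‖ := norm_pos_iff.2 hv
  have hA : (0:ℝ) < ‖(inner ℂ v s : ℂ)‖ := norm_pos_iff.2 ha
  set t : ℝ := ‖v‖^2 with htdef
  have ht : (0:ℝ) < t := by positivity
  clear_value t
  set a : ℂ := inner ℂ v s with haa
  have h2 : (inner ℂ s v : ℂ) = starRingEnd ℂ a := (inner_conj_symm s v).symm
  clear_value a
  set c : ℂ := -(a / (t : ℂ)) with hcdef
  clear_value c
  have hmc : c * starRingEnd ℂ a = ((-(‖a‖^2/t) : ℝ) : ℂ) := by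
    rw [hcdef, neg_mul, div_mul_eq_mul_div, Complex.mul_conj']
    push_cast
    ring
  have hc : ‖c‖ = ‖a‖/t := by
    rw [hcdef, norm_neg, norm_div, Complex.norm_real, Real.norm_of_nonneg ht.le]
  have hre : RCLike.re ((((-(‖a‖^2/t)) : ℝ) : ℂ)) = -(‖a‖^2/t) := by
    rw [RCLike.re_to_complex, Complex.ofReal_re]
  have hsq : ‖s + c • v‖^2 = ‖s‖^2 - ‖a‖^2/t := by
    rw [norm_add_sq (𝕜 := ℂ), inner_smul_right, h2, hmc, norm_smul, hc, hre, htdef]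
    field_simp
    ring
  have hle := pow_le_pow_left₀ (norm_nonneg s) (h c) 2
  rw [hsq] at hle
  have : (0:ℝ) < ‖a‖^2/t := by positivity
  linarith

lemma aeval_monomial_mulVec {n : ℕ} (A : Matrix (Fin n) (Fin n) ℂ) (c : ℂ) (j : ℕ)
    (r : Fin n → ℂ) : (aeval A (C c * X ^ j)).mulVec r = c • ((A ^ j) *ᵥ r) := by
  rw [_root_.map_mul, aeval_C, aeval_X_pow, Algebra.algebraMap_eq_smul_one, smul_mul_assoc,
    one_mul, smul_mulVec]

lemma aeval_C_mul_mulVec {n : ℕ} (A : Matrix (Fin n) (Fin n) ℂ) (c : ℂ) (g : ℂ[X])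
    (r : Fin n → ℂ) : (aeval A (C c * g)).mulVec r = c • ((aeval A g) *ᵥ r) := by
  rw [_root_.map_mul, aeval_C, Algebra.algebraMap_eq_smul_one, smul_mul_assoc,
    one_mul, smul_mulVec]

lemma sum_mulVec' {n : ℕ} {ι : Type*} [DecidableEq ι] (t : Finset ι)
    (f : ι → Matrix (Fin n) (Fin n) ℂ) (r : Fin n → ℂ) :
    (∑ j ∈ t, f j) *ᵥ r = ∑ j ∈ t, f j *ᵥ r := by
  induction t using Finset.induction with
  | empty => simp
  | insert _ _ h ih => rw [Finset.sum_insert h, Finset.sum_insert h, add_mulVec, ih]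

/-- The GMRES residual is orthogonal to `A^j r` for `1 ≤ j ≤ m`. -/
lemma resid_orth {n m : ℕ} (A : Matrix (Fin n) (Fin n) ℂ) (r s : Fin n → ℂ)
    (h : IsGMRESResidual m A r s) {j : ℕ} (hj1 : 1 ≤ j) (hjm : j ≤ m) :
    (inner ℂ (ee ((A ^ j) *ᵥ r)) (ee s) : ℂ) = 0 := by
  obtain ⟨p, hdeg, h0, hs, hmin⟩ := h
  apply inner_eq_zero_of_min
  intro c
  have hdq : (p + C c * X ^ j).natDegree ≤ m :=
    (natDegree_add_le _ _).trans (max_le hdeg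
      ((natDegree_C_mul_le _ _).trans (by simpa using hjm)))
  have h0q : (p + C c * X ^ j).eval 0 = 1 := by
    have : j ≠ 0 := by omega
    simp [h0, zero_pow this]
  have := hmin _ hdq h0q
  rw [map_add, add_mulVec, aeval_monomial_mulVec, ← hs] at this
  rw [euclidNorm_ee, euclidNorm_ee, ee_add, ee_smul] at this
  exact this

/-- If the residual is nonzero, no nonzero polynomial of degree ≤ m kills `r`. -/
lemma no_kill {n m : ℕ} {A : Matrix (Fin n) (Fin n) ℂ} (hA : IsUnit A) {r s : Fin n → ℂ}
    (hs : s ≠ 0) (h : IsGMRESResidual m A r s) :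
    ∀ g : ℂ[X], g ≠ 0 → g.natDegree ≤ m → (aeval A g) *ᵥ r ≠ 0 := by
  obtain ⟨p, hdeg, h0, hsp, hmin⟩ := h
  have hspos : 0 < euclidNorm s := euclidNorm_pos hs
  suffices H : ∀ N : ℕ, ∀ g : ℂ[X], g.natDegree ≤ N → g ≠ 0 → g.natDegree ≤ m →
      (aeval A g) *ᵥ r ≠ 0 by
    intro g hg hgm; exact H g.natDegree g le_rfl hg hgm
  intro N
  induction N with
  | zero =>
    intro g hgN hg hgm hzero
    by_cases hc0 : g.coeff 0 = 0
    · obtain ⟨g', rfl⟩ := X_dvd_iff.2 hc0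
      have hg' : g' ≠ 0 := by rintro rfl; simp at hg
      have : (X * g').natDegree = 1 + g'.natDegree := by
        rw [natDegree_mul X_ne_zero hg', natDegree_X]
      omega
    · have hq : ((C (g.coeff 0)⁻¹ * g).natDegree ≤ m) :=
        (natDegree_C_mul_le _ _).trans hgm
      have hq0 : (C (g.coeff 0)⁻¹ * g).eval 0 = 1 := by
        rw [eval_mul, eval_C, ← coeff_zero_eq_eval_zero]
        exact inv_mul_cancel₀ hc0
      have := hmin _ hq hq0
      rw [aeval_C_mul_mulVec, hzero, smul_zero, euclidNorm_zero] at this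
      linarith
  | succ N ih =>
    intro g hgN hg hgm hzero
    by_cases hc0 : g.coeff 0 = 0
    · obtain ⟨g', rfl⟩ := X_dvd_iff.2 hc0
      have hg' : g' ≠ 0 := by rintro rfl; simp at hg
      have hdeg' : (X * g').natDegree = 1 + g'.natDegree := by
        rw [natDegree_mul X_ne_zero hg', natDegree_X]
      apply ih g' (by omega) hg' (by omega)
      have hz : A *ᵥ ((aeval A g') *ᵥ r) = 0 := by
        rw [mulVec_mulVec]
        rw [_root_.map_mul, aeval_X] at hzero
        exact hzero
      have hinj := (mulVec_injective_iff_isUnit (A := A)).2 hA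
      have : A *ᵥ ((aeval A g') *ᵥ r) = A *ᵥ 0 := by rw [hz, mulVec_zero]
      exact hinj this
    · have hq : ((C (g.coeff 0)⁻¹ * g).natDegree ≤ m) :=
        (natDegree_C_mul_le _ _).trans hgm
      have hq0 : (C (g.coeff 0)⁻¹ * g).eval 0 = 1 := by
        rw [eval_mul, eval_C, ← coeff_zero_eq_eval_zero]
        exact inv_mul_cancel₀ hc0
      have := hmin _ hq hq0
      rw [aeval_C_mul_mulVec, hzero, smul_zero, euclidNorm_zero] at this
      linarith

/-- The Krylov vectors are linearly independent when the residual is nonzero. -/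
lemma krylov_li {n m : ℕ} {A : Matrix (Fin n) (Fin n) ℂ} {r : Fin n → ℂ}
    (NK : ∀ g : ℂ[X], g ≠ 0 → g.natDegree ≤ m → (aeval A g) *ᵥ r ≠ 0)
    (hnm : n ≤ m + 1) :
    LinearIndependent ℂ (fun j : Fin n => (A ^ (j : ℕ)) *ᵥ r) := by
  rw [Fintype.linearIndependent_iff]
  intro g hg i
  by_contra hgi
  set P : ℂ[X] := ∑ j : Fin n, C (g j) * X ^ (j : ℕ) with hP
  have hcoeff : P.coeff (i : ℕ) = g i := by
    rw [hP, finset_sum_coeff]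
    rw [Finset.sum_eq_single i]
    · rw [coeff_C_mul, coeff_X_pow, if_pos rfl, mul_one]
    · intro j _ hji
      rw [coeff_C_mul, coeff_X_pow, if_neg (fun hc => hji (Fin.val_injective hc.symm)),
        mul_zero]
    · intro hi; exact absurd (Finset.mem_univ i) hi
  have hPne : P ≠ 0 := fun h => hgi (by rw [← hcoeff, h, coeff_zero])
  have hPdeg : P.natDegree ≤ m := by
    apply natDegree_sum_le_of_forall_le
    intro j _
    exact (natDegree_C_mul_le _ _).trans (by simp; omega)
  have hPzero : (aeval A P) *ᵥ r = 0 := by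
    rw [hP, map_sum, sum_mulVec']
    rw [Finset.sum_congr rfl (fun j _ => aeval_monomial_mulVec A (g j) j r)]
    exact hg
  exact NK P hPne hPdeg hPzero

lemma inner_mulVec {n : ℕ} (A : Matrix (Fin n) (Fin n) ℂ) (x y : Fin n → ℂ) :
    (inner ℂ (ee (A *ᵥ x)) (ee y) : ℂ) = inner ℂ (ee x) (ee (Aᴴ *ᵥ y)) := by
  rw [EuclideanSpace.inner_eq_star_dotProduct, EuclideanSpace.inner_eq_star_dotProduct]
  show y ⬝ᵥ star (A *ᵥ x) = (Aᴴ *ᵥ y) ⬝ᵥ star x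
  rw [dotProduct_comm y, dotProduct_comm (Aᴴ *ᵥ y), star_mulVec, dotProduct_mulVec]

/-- Orthogonality extends to polynomial combinations with zero constant term. -/
lemma orth_sum {n m : ℕ} {A : Matrix (Fin n) (Fin n) ℂ} {v w : Fin n → ℂ}
    (horth : ∀ j : ℕ, 1 ≤ j → j ≤ m → (inner ℂ (ee ((A ^ j) *ᵥ v)) (ee w) : ℂ) = 0)
    (g : ℂ[X]) (hdeg : g.natDegree ≤ m) (h0 : g.coeff 0 = 0) :
    (inner ℂ (ee ((aeval A g) *ᵥ v)) (ee w) : ℂ) = 0 := by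
  rw [aeval_eq_sum_range, sum_mulVec', ee_sum, sum_inner]
  apply Finset.sum_eq_zero
  intro i hi
  rw [Finset.mem_range] at hi
  rw [smul_mulVec, ee_smul, inner_smul_left]
  by_cases hi0 : i = 0
  · subst hi0; rw [h0]; simp
  · rw [horth i (by omega) (by omega), mul_zero]

/-- The key Galerkin identity: `⟨v, w⟩ = ‖w‖²` for a GMRES residual `w` of `v`. -/
lemma resid_inner_eq {n m : ℕ} {A : Matrix (Fin n) (Fin n) ℂ} {v w : Fin n → ℂ}
    (h : IsGMRESResidual m A v w)
    (horth : ∀ j : ℕ, 1 ≤ j → j ≤ m → (inner ℂ (ee ((A ^ j) *ᵥ v)) (ee w) : ℂ) = 0) :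
    (inner ℂ (ee v) (ee w) : ℂ) = (‖ee w‖ : ℂ)^2 := by
  obtain ⟨p, hdeg, h0, hsp, -⟩ := h
  have hg : ((p - 1).natDegree ≤ m) := (natDegree_sub_le _ _).trans (by simp [hdeg])
  have hg0 : (p - 1).coeff 0 = 0 := by
    rw [coeff_sub, coeff_zero_eq_eval_zero, h0, coeff_one, if_pos rfl, sub_self]
  have key := orth_sum horth (p - 1) hg hg0
  rw [map_sub, sub_mulVec, _root_.map_one, one_mulVec, ← hsp] at key
  rw [ee_sub, inner_sub_left, inner_self_eq_norm_sq_to_K] at key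
  exact (sub_eq_zero.mp key).symm

/- ### Main theorem -/

set_option maxHeartbeats 1000000 in
/-- Alternating residuals, Hermitian case: for GMRES(n-1) applied to a Hermitian invertible
matrix, `r_{k+1} = α_k r_{k-1}` with `α_k = ‖r_{k+1}‖²/‖r_k‖² ∈ (0, 1]`. -/
theorem gmres_alternating_residuals_hermitian {n : ℕ} (hn : 2 ≤ n) (q : ℕ)
    (A : Matrix (Fin n) (Fin n) ℂ) (hherm : Aᴴ = A) (hA : IsUnit A)
    (r : ℕ → Fin n → ℂ) (hr : ∀ k ≤ q, r k ≠ 0)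
    (hres : ∀ k < q, IsGMRESResidual (n - 1) A (r k) (r (k + 1))) :
    ∀ k, 1 ≤ k → k < q →
      r (k + 1) = ((euclidNorm (r (k + 1)) ^ 2 / euclidNorm (r k) ^ 2 : ℝ) : ℂ) • r (k - 1) ∧
        0 < euclidNorm (r (k + 1)) ^ 2 / euclidNorm (r k) ^ 2 ∧
          euclidNorm (r (k + 1)) ^ 2 / euclidNorm (r k) ^ 2 ≤ 1 := by
  intro k hk1 hkq
  have hkk : k - 1 + 1 = k := by omega
  set u := r (k - 1) with hu_def
  set v := r k with hv_def
  set w := r (k + 1) with hw_def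
  have hu : u ≠ 0 := hr _ (by omega)
  have hv : v ≠ 0 := hr _ (by omega)
  have hw : w ≠ 0 := hr _ (by omega)
  have hres0 : IsGMRESResidual (n - 1) A u v := by
    have := hres (k - 1) (by omega)
    rwa [hkk] at this
  have hres1 : IsGMRESResidual (n - 1) A v w := hres k hkq
  -- orthogonality relations
  have O1 : ∀ j : ℕ, 1 ≤ j → j ≤ n - 1 → (inner ℂ (ee ((A ^ j) *ᵥ v)) (ee w) : ℂ) = 0 :=
    fun j h1 h2 => resid_orth A v w hres1 h1 h2
  have O0 : ∀ j : ℕ, 1 ≤ j → j ≤ n - 1 → (inner ℂ (ee ((A ^ j) *ᵥ u)) (ee v) : ℂ) = 0 :=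
    fun j h1 h2 => resid_orth A u v hres0 h1 h2
  have O2 : ∀ j : ℕ, 1 ≤ j → j ≤ n - 1 → (inner ℂ (ee ((A ^ j) *ᵥ v)) (ee u) : ℂ) = 0 := by
    intro j h1 h2
    have hAj : (A ^ j)ᴴ = A ^ j := by rw [conjTranspose_pow, hherm]
    have h3 : (inner ℂ (ee ((A ^ j) *ᵥ u)) (ee v) : ℂ) = inner ℂ (ee u) (ee ((A ^ j) *ᵥ v)) := by
      have := inner_mulVec (A ^ j) u v
      rwa [hAj] at this
    have h4 : (inner ℂ (ee u) (ee ((A ^ j) *ᵥ v)) : ℂ) = 0 := by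
      rw [← h3]; exact O0 j h1 h2
    rw [← inner_conj_symm, h4, map_zero]
  -- linear independence of the Krylov family of v
  have NK := no_kill hA hw hres1
  have LI : LinearIndependent ℂ (fun j : Fin n => (A ^ (j : ℕ)) *ᵥ v) :=
    krylov_li NK (by omega)
  -- the shifted family in Euclidean space
  have hemb : Function.Injective (fun j : Fin (n - 1) => (⟨(j : ℕ) + 1, by omega⟩ : Fin n)) := by
    intro a b hab
    have : (a : ℕ) + 1 = (b : ℕ) + 1 := congrArg Fin.val hab
    exact Fin.val_injective (by omega)
  have LIc : LinearIndependent ℂ (fun j : Fin (n - 1) => (A ^ ((j : ℕ) + 1)) *ᵥ v) := by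
    have h := LI.comp (fun j : Fin (n - 1) => (⟨(j : ℕ) + 1, by omega⟩ : Fin n)) hemb
    have heq : (fun j : Fin (n - 1) => (A ^ ((j : ℕ) + 1)) *ᵥ v) =
        (fun i : Fin n => (A ^ (i : ℕ)) *ᵥ v) ∘
          (fun j : Fin (n - 1) => (⟨(j : ℕ) + 1, by omega⟩ : Fin n)) := by
      funext j
      rfl
    rw [heq]
    exact h
  have LIe : LinearIndependent ℂ (fun j : Fin (n - 1) => ee ((A ^ ((j : ℕ) + 1)) *ᵥ v)) := by
    have := LIc.map' (WithLp.linearEquiv 2 ℂ (Fin n → ℂ)).symm.toLinearMap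
      (LinearEquiv.ker _)
    exact this
  set V : Submodule ℂ (EuclideanSpace ℂ (Fin n)) :=
    Submodule.span ℂ (Set.range fun j : Fin (n - 1) => ee ((A ^ ((j : ℕ) + 1)) *ᵥ v)) with hV
  have hVrank : Module.finrank ℂ V = n - 1 := by
    rw [hV, finrank_span_eq_card LIe, Fintype.card_fin]
  have hVorank : Module.finrank ℂ Vᗮ = 1 := by
    have h1 := Submodule.finrank_add_finrank_orthogonal V
    rw [hVrank, finrank_euclideanSpace_fin] at h1
    omega
  have memVo : ∀ x : Fin n → ℂ,
      (∀ j : ℕ, 1 ≤ j → j ≤ n - 1 → (inner ℂ (ee ((A ^ j) *ᵥ v)) (ee x) : ℂ) = 0) →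
      ee x ∈ Vᗮ := by
    intro x hx
    rw [Submodule.mem_orthogonal]
    intro y hy
    induction hy using Submodule.span_induction with
    | mem y hy =>
      obtain ⟨j, rfl⟩ := hy
      exact hx ((j : ℕ) + 1) (by omega) (by omega)
    | zero => exact inner_zero_left _
    | add _ _ _ _ h1 h2 => rw [inner_add_left, h1, h2, add_zero]
    | smul c _ _ h1 => rw [inner_smul_left, h1, mul_zero]
  have hwV : ee w ∈ Vᗮ := memVo w O1
  have huV : ee u ∈ Vᗮ := memVo u O2
  have heeu : ee u ≠ 0 := fun h => hu (ee_injective (h.trans ee_zero.symm))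
  have hspan : Submodule.span ℂ {ee u} = Vᗮ := by
    apply Submodule.eq_of_le_of_finrank_le
    · rw [Submodule.span_le, Set.singleton_subset_iff]; exact huV
    · rw [hVorank, finrank_span_singleton heeu]
  obtain ⟨c, hc⟩ : ∃ c : ℂ, c • ee u = ee w :=
    Submodule.mem_span_singleton.1 (hspan ▸ hwV)
  -- inner product identities
  have IP1 : (inner ℂ (ee v) (ee w) : ℂ) = (‖ee w‖ : ℂ)^2 := resid_inner_eq hres1 O1
  have IP0 : (inner ℂ (ee u) (ee v) : ℂ) = (‖ee v‖ : ℂ)^2 := resid_inner_eq hres0 O0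
  have hvu : (inner ℂ (ee v) (ee u) : ℂ) = (‖ee v‖ : ℂ)^2 := by
    rw [← inner_conj_symm, IP0]
    simp
  have hvw : (‖ee w‖ : ℂ)^2 = c * (‖ee v‖ : ℂ)^2 := by
    rw [← IP1, ← hc, inner_smul_right, hvu]
  have hvpos : 0 < euclidNorm v := euclidNorm_pos hv
  have hwpos : 0 < euclidNorm w := euclidNorm_pos hw
  have hvne : ((‖ee v‖ : ℂ))^2 ≠ 0 := by
    rw [euclidNorm_ee] at hvpos
    intro h
    rw [pow_eq_zero_iff (by norm_num)] at h
    simp only [Complex.ofReal_eq_zero] at h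
    linarith
  have hcval : c = ((euclidNorm w ^ 2 / euclidNorm v ^ 2 : ℝ) : ℂ) := by
    have hc2 : c = (‖ee w‖ : ℂ)^2 / (‖ee v‖ : ℂ)^2 := (eq_div_iff hvne).mpr hvw.symm
    rw [hc2, euclidNorm_ee, euclidNorm_ee]
    push_cast
    ring
  constructor
  · apply ee_injective
    rw [ee_smul, ← hcval, hc]
  constructor
  · positivity
  · have hle : euclidNorm w ≤ euclidNorm v := by
      obtain ⟨p, _, _, _, hmin⟩ := hres1
      have := hmin 1 (by simp) (by simp)
      rwa [_root_.map_one, one_mulVec] at this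
    rw [div_le_one (by positivity)]
    exact pow_le_pow_left₀ (le_of_lt hwpos) hle 2
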